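/- The group PSL_2(F_q) is simple for every prime power q ≥ 4. -/

import Mathlib

open Matrix Matrix.SpecialLinearGroup

namespace PSL2Aux

variable {F : Type*} [Field F]

local notation "SL2" => Matrix.SpecialLinearGroup (Fin 2) F

def E (t : F) : SL2 := ⟨!![1, t; 0, 1], by simp [Matrix.det_fin_two_of]⟩

def E' (t : F) : SL2 := ⟨!![1, 0; t, 1], by simp [Matrix.det_fin_two_of]⟩

def dg (a : F) (ha : a ≠ 0) : SL2 := ⟨!![a, 0; 0, a⁻¹], by
  simp [Matrix.det_fin_two_of]
  field_simp⟩

def wm : SL2 := ⟨!![0, 1; -1, 0], by simp [Matrix.det_fin_two_of]⟩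

@[simp] lemma E_coe (t : F) : (E t : Matrix (Fin 2) (Fin 2) F) = !![1, t; 0, 1] := rfl
@[simp] lemma E'_coe (t : F) : (E' t : Matrix (Fin 2) (Fin 2) F) = !![1, 0; t, 1] := rfl
@[simp] lemma dg_coe (a : F) (ha : a ≠ 0) :
    (dg a ha : Matrix (Fin 2) (Fin 2) F) = !![a, 0; 0, a⁻¹] := rfl
@[simp] lemma wm_coe : ((wm : SL2) : Matrix (Fin 2) (Fin 2) F) = !![0, 1; -1, 0] := rfl

lemma E_mul (t s : F) : E t * E s = E (t + s) := by
  ext i j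
  simp only [coe_mul, E_coe, Matrix.mul_fin_two]
  fin_cases i <;> fin_cases j <;> simp <;> ring

lemma E'_mul (t s : F) : E' t * E' s = E' (t + s) := by
  ext i j
  simp only [coe_mul, E'_coe, Matrix.mul_fin_two]
  fin_cases i <;> fin_cases j <;> simp

@[simp] lemma E_zero : (E 0 : SL2) = 1 := by
  ext i j
  simp only [E_coe, coe_one]
  fin_cases i <;> fin_cases j <;> simp [Matrix.one_apply]

@[simp] lemma E'_zero : (E' 0 : SL2) = 1 := by
  ext i j
  simp only [E'_coe, coe_one]
  fin_cases i <;> fin_cases j <;> simp [Matrix.one_apply]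

lemma E_inv (t : F) : (E t)⁻¹ = E (-t) :=
  inv_eq_of_mul_eq_one_right (by rw [E_mul, add_neg_cancel, E_zero])

lemma E'_inv (t : F) : (E' t)⁻¹ = E' (-t) :=
  inv_eq_of_mul_eq_one_right (by rw [E'_mul, add_neg_cancel, E'_zero])

/-- conjugating a lower transvection by `w` gives an upper transvection -/
lemma wm_conj (s : F) : (wm : SL2) * E' (-s) * wm⁻¹ = E s := by
  have hw : (wm⁻¹ : SL2) = ⟨!![0, -1; 1, 0], by simp [Matrix.det_fin_two_of]⟩ := by
    rw [SL2_inv_expl]; ext i j; fin_cases i <;> fin_cases j <;> simp [wm]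
  ext i j
  rw [coe_mul, coe_mul, hw]
  simp only [wm_coe, E'_coe, E_coe, Matrix.mul_fin_two]
  fin_cases i <;> fin_cases j <;> simp

/-- conjugating a lower transvection by a diagonal matrix -/
lemma dg_conj (a : F) (ha : a ≠ 0) (t : F) :
    dg a ha * E' t * (dg a ha)⁻¹ = E' (a⁻¹ * a⁻¹ * t) := by
  have hd : ((dg a ha)⁻¹ : SL2) = ⟨!![a⁻¹, 0; 0, a], by
      simp [Matrix.det_fin_two_of]; field_simp⟩ := by
    rw [SL2_inv_expl]; ext i j; fin_cases i <;> fin_cases j <;> simp [dg]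
  ext i j
  rw [coe_mul, coe_mul, hd]
  simp only [dg_coe, E'_coe, Matrix.mul_fin_two]
  fin_cases i <;> fin_cases j <;> simp [ha] <;> ring

variable {N : Subgroup (Matrix.SpecialLinearGroup (Fin 2) F)}

section Gen

/-- every element of `F` is a difference of squares times `t` (finite field) -/
lemma sq_diff [Fintype F] (t : F) (ht : t ≠ 0) (s : F) :
    ∃ x y : F, (x * x - y * y) * t = s := by
  by_cases h2 : (2 : F) = 0
  · -- char 2 : squaring is surjective
    have hinj : Function.Injective (fun x : F => x * x) := by
      intro x y hxy
      simp only at hxy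
      have : (x - y) * (x - y) = 0 := by
        have hx2 : x + y = x - y := by
          have : (2 : F) * y = 0 := by rw [h2, zero_mul]
          linear_combination this
        calc (x - y) * (x - y) = (x-y) * (x+y) := by rw [hx2]
        _ = x * x - y * y := by ring
        _ = 0 := by rw [hxy, sub_self]
      exact sub_eq_zero.mp (mul_self_eq_zero.mp this)
    have hsurj : Function.Surjective (fun x : F => x * x) :=
      Finite.injective_iff_surjective.mp hinj
    obtain ⟨x, hx⟩ := hsurj (s / t)
    exact ⟨x, 0, by simp only at hx; rw [mul_zero, sub_zero, hx, div_mul_cancel₀ s ht]⟩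
  · refine ⟨(s / t + 1) / 2, (s / t - 1) / 2, ?_⟩
    field_simp
    ring
/-- if a normal subgroup contains one nontrivial lower transvection, it contains all of them -/
lemma allE' [Fintype F] (hN : N.Normal) (t : F) (ht : t ≠ 0) (hEt : E' t ∈ N) (s : F) :
    E' s ∈ N := by
  have sq : ∀ a : F, E' (a * a * t) ∈ N := by
    intro a
    rcases eq_or_ne a 0 with rfl | ha
    · simpa using N.one_mem
    · have := hN.conj_mem _ hEt (dg a⁻¹ (inv_ne_zero ha))
      rwa [dg_conj, inv_inv] at this
  obtain ⟨x, y, hxy⟩ := sq_diff t ht s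
  have : E' (x * x * t) * (E' (y * y * t))⁻¹ ∈ N := N.mul_mem (sq x) (N.inv_mem (sq y))
  rwa [E'_inv, E'_mul, show x * x * t + -(y * y * t) = s by linear_combination hxy] at this

lemma allE [Fintype F] (hN : N.Normal) (t : F) (ht : t ≠ 0) (hEt : E' t ∈ N) (s : F) :
    E s ∈ N := by
  have := hN.conj_mem _ (allE' hN t ht hEt (-s)) wm
  rwa [wm_conj] at this

/-- an element with nonzero lower-left entry is a product of transvections -/
lemma mem_of_lowleft_ne (hN : N.Normal) [Fintype F] (t : F) (ht : t ≠ 0) (hEt : E' t ∈ N)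
    (g : Matrix.SpecialLinearGroup (Fin 2) F) (hg : g.1 1 0 ≠ 0) : g ∈ N := by
  set c := g.1 1 0 with hc
  have hdecomp : g = E ((g.1 0 0 - 1) / c) * E' c * E ((g.1 1 1 - 1) / c) := by
    have hdet : g.1 0 0 * g.1 1 1 - g.1 0 1 * g.1 1 0 = 1 := by
      have := g.2; rwa [Matrix.det_fin_two] at this
    ext i j
    simp only [coe_mul, E_coe, E'_coe, Matrix.mul_fin_two]
    fin_cases i <;> fin_cases j <;> simp
    · rw [div_mul_cancel₀ _ hg]; ring
    · rw [div_mul_cancel₀ _ hg]; field_simp; rw [hc]; linear_combination -hdet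
    · rfl
    · rw [mul_div_cancel₀ _ hg]; ring
  rw [hdecomp]
  exact N.mul_mem (N.mul_mem (allE hN t ht hEt _) (allE' hN t ht hEt _)) (allE hN t ht hEt _)

lemma eq_top (hN : N.Normal) [Fintype F] (t : F) (ht : t ≠ 0) (hEt : E' t ∈ N) : N = ⊤ := by
  rw [Subgroup.eq_top_iff']
  intro g
  by_cases hg : g.1 1 0 ≠ 0
  · exact mem_of_lowleft_ne hN t ht hEt g hg
  · push_neg at hg
    have hdet : g.1 0 0 * g.1 1 1 - g.1 0 1 * g.1 1 0 = 1 := by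
      have := g.2; rwa [Matrix.det_fin_two] at this
    have h11 : g.1 1 1 ≠ 0 := by
      intro h; rw [h, hg] at hdet; simp at hdet
    have hlow : (g * E' 1).1 1 0 ≠ 0 := by
      rw [coe_mul, Matrix.mul_apply]
      simpa [Fin.sum_univ_two, E', hg] using h11
    have := mem_of_lowleft_ne hN t ht hEt (g * E' 1) hlow
    have h2 := N.mul_mem this (N.inv_mem (allE' hN t ht hEt 1))
    rwa [mul_inv_cancel_right] at h2

end Gen

section Conj

lemma det_entries (g : Matrix.SpecialLinearGroup (Fin 2) F) :
    g.1 0 0 * g.1 1 1 - g.1 0 1 * g.1 1 0 = 1 := by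
  have := g.2; rwa [Matrix.det_fin_two] at this

lemma offdiag_eq_zero_of_central {g : Matrix.SpecialLinearGroup (Fin 2) F}
    (hg : g ∈ Subgroup.center (Matrix.SpecialLinearGroup (Fin 2) F)) :
    g.1 0 1 = 0 ∧ g.1 1 0 = 0 := by
  have h := scalar_eq_self_of_mem_center hg 0
  constructor
  · have := congr_fun (congr_fun h 0) 1
    simpa [Matrix.scalar_apply, Matrix.diagonal_apply] using this.symm
  · have := congr_fun (congr_fun h 1) 0
    simpa [Matrix.scalar_apply, Matrix.diagonal_apply] using this.symm

lemma central_of_entries {g : Matrix.SpecialLinearGroup (Fin 2) F}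
    (h01 : g.1 0 1 = 0) (h10 : g.1 1 0 = 0) (hd : g.1 0 0 = g.1 1 1) :
    g ∈ Subgroup.center (Matrix.SpecialLinearGroup (Fin 2) F) := by
  rw [mem_center_iff]
  refine ⟨g.1 0 0, ?_, ?_⟩
  · have hdet := det_entries g
    rw [h01, hd] at hdet
    rw [Fintype.card_fin, hd]
    linear_combination hdet
  · ext i j
    fin_cases i <;> fin_cases j <;>
      simp [Matrix.scalar_apply, Matrix.diagonal_apply, h01, h10, hd]

lemma trace_conj (x g : Matrix.SpecialLinearGroup (Fin 2) F) :
    (x * g * x⁻¹).1 0 0 + (x * g * x⁻¹).1 1 1 = g.1 0 0 + g.1 1 1 := by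
  have h : Matrix.trace ((x * g * x⁻¹).1) = Matrix.trace g.1 := by
    rw [coe_mul, coe_mul, Matrix.trace_mul_cycle, ← coe_mul, ← coe_mul,
      show x⁻¹ * x * g = g by group]
  simpa [Matrix.trace_fin_two] using h

lemma step0 (g : Matrix.SpecialLinearGroup (Fin 2) F)
    (hg : g ∉ Subgroup.center (Matrix.SpecialLinearGroup (Fin 2) F)) :
    ∃ x : Matrix.SpecialLinearGroup (Fin 2) F, (x * g * x⁻¹).1 1 0 ≠ 0 := by
  by_cases h10 : g.1 1 0 ≠ 0
  · exact ⟨1, by simpa using h10⟩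
  push_neg at h10
  by_cases h01 : g.1 0 1 ≠ 0
  · refine ⟨wm, ?_⟩
    have hw : (wm⁻¹ : Matrix.SpecialLinearGroup (Fin 2) F)
        = ⟨!![0, -1; 1, 0], by simp [Matrix.det_fin_two_of]⟩ := by
      rw [SL2_inv_expl]; ext i j; fin_cases i <;> fin_cases j <;> simp [wm]
    have : (wm * g * wm⁻¹).1 1 0 = -(g.1 0 1) := by
      rw [coe_mul, coe_mul, hw]
      simp only [Matrix.mul_apply, Fin.sum_univ_two]
      simp [wm]
    rw [this]
    simpa using h01
  push_neg at h01
  have hd : g.1 0 0 ≠ g.1 1 1 := by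
    intro h
    exact hg (central_of_entries h01 h10 h)
  refine ⟨E' 1, ?_⟩
  have he : ((E' 1)⁻¹ : Matrix.SpecialLinearGroup (Fin 2) F) = E' (-1) := E'_inv 1
  have : (E' 1 * g * (E' 1)⁻¹).1 1 0
      = g.1 0 0 + g.1 1 0 - (g.1 0 1 + g.1 1 1) := by
    rw [coe_mul, coe_mul, he]
    simp only [Matrix.mul_apply, Fin.sum_univ_two]
    simp [E']
    ring
  rw [this, h01, h10]
  intro h
  apply hd
  linear_combination h

lemma exists_conj00 (g : Matrix.SpecialLinearGroup (Fin 2) F)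
    (hg : g ∉ Subgroup.center (Matrix.SpecialLinearGroup (Fin 2) F)) :
    ∃ x : Matrix.SpecialLinearGroup (Fin 2) F,
      (x * g * x⁻¹).1 0 0 = 0 ∧ (x * g * x⁻¹).1 1 1 = g.1 0 0 + g.1 1 1 := by
  obtain ⟨x₁, hx₁⟩ := step0 g hg
  set g' := x₁ * g * x₁⁻¹ with hg'
  set t : F := -(g'.1 0 0) / (g'.1 1 0) with htdef
  have key : E t * x₁ * g * (E t * x₁)⁻¹ = E t * g' * (E t)⁻¹ := by
    rw [hg']; group
  have h0 : (E t * g' * (E t)⁻¹).1 0 0 = 0 := by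
    have h : (E t * g' * (E t)⁻¹).1 0 0 = g'.1 0 0 + t * g'.1 1 0 := by
      rw [E_inv, coe_mul, coe_mul, E_coe, E_coe]
      simp only [Matrix.mul_apply, Fin.sum_univ_two]
      simp
      try ring
    rw [h, htdef]
    field_simp
    ring
  refine ⟨E t * x₁, by rw [key]; exact h0, ?_⟩
  have htr := trace_conj (E t) g'
  have htr2 := trace_conj x₁ g
  rw [h0] at htr
  rw [← hg'] at htr2
  rw [key]
  linear_combination htr + htr2

end Conj

section Transvection

/-- Case A: there is `a` with `a⁴ ≠ 1`. -/
lemma caseA (hN : N.Normal) (M : Matrix.SpecialLinearGroup (Fin 2) F) (hM : M ∈ N)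
    (h00 : M.1 0 0 = 0) (a : F) (ha : a ≠ 0) (ha4 : a * a * a * a ≠ 1) :
    ∃ t : F, t ≠ 0 ∧ E' t ∈ N := by
  set b := M.1 1 0 with hb
  set c := M.1 0 1 with hc
  set r := M.1 1 1 with hr
  have hcb : c * b = -1 := by
    have := det_entries M
    rw [h00] at this
    linear_combination -this
  have hM_eq : M.1 = !![0, c; b, r] := by
    ext i j; fin_cases i <;> fin_cases j <;> simp [h00, hb, hc, hr]
  have hMinv : (M⁻¹).1 = !![r, -c; -b, 0] := by
    rw [SL2_inv_expl]
    ext i j; fin_cases i <;> fin_cases j <;> simp [h00, hb, hc, hr]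
  have hdginv : ((dg a ha)⁻¹).1 = !![a⁻¹, 0; 0, a] := by
    rw [SL2_inv_expl]
    ext i j; fin_cases i <;> fin_cases j <;> simp [dg]
  set k := M * dg a ha * M⁻¹ * (dg a ha)⁻¹ with hkdef
  have hkN : k ∈ N := by
    have h1 : dg a ha * M⁻¹ * (dg a ha)⁻¹ ∈ N := hN.conj_mem _ (N.inv_mem hM) _
    have := N.mul_mem hM h1
    rwa [show M * (dg a ha * M⁻¹ * (dg a ha)⁻¹) = k by rw [hkdef]; group] at this
  have ha' : a * a⁻¹ = 1 := mul_inv_cancel₀ ha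
  have hk : (k.1) = !![a⁻¹ * a⁻¹, 0; b * r * (1 - a⁻¹ * a⁻¹), a * a] := by
    rw [hkdef, coe_mul, coe_mul, coe_mul, hM_eq, hMinv, dg_coe, hdginv]
    simp only [Matrix.mul_fin_two]
    ext i j
    fin_cases i <;> fin_cases j
    · simp; linear_combination (-(a⁻¹ * a⁻¹)) * hcb
    · simp
    · simp; linear_combination (b * r) * ha'
    · simp; linear_combination (-(a * a)) * hcb
  have hkinv : ((k⁻¹).1) = !![a * a, 0; -(b * r * (1 - a⁻¹ * a⁻¹)), a⁻¹ * a⁻¹] := by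
    rw [SL2_inv_expl]
    ext i j
    fin_cases i <;> fin_cases j <;> simp [hk]
  refine ⟨a * a * a * a - 1, fun h => ha4 (by linear_combination h), ?_⟩
  have hmem : k * (E' 1 * k⁻¹ * (E' 1)⁻¹) ∈ N :=
    N.mul_mem hkN (hN.conj_mem _ (N.inv_mem hkN) _)
  have hident : k * (E' 1 * k⁻¹ * (E' 1)⁻¹) = E' (a * a * a * a - 1) := by
    have hE'inv : ((E' (1:F))⁻¹).1 = !![1, 0; -1, 1] := by
      rw [E'_inv]; norm_num
    ext i j
    rw [show k * (E' 1 * k⁻¹ * (E' 1)⁻¹) = k * E' 1 * k⁻¹ * (E' 1)⁻¹ by group]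
    rw [coe_mul, coe_mul, coe_mul, hk, hkinv, E'_coe, hE'inv]
    simp only [Matrix.mul_fin_two]
    fin_cases i <;> fin_cases j
    · simp; linear_combination (a * a⁻¹ + 1) * ha'
    · simp
    · simp; linear_combination (-(a * a⁻¹ + 1)) * ha'
    · simp; linear_combination (a * a⁻¹ + 1) * ha'
  rw [← hident]
  exact hmem


lemma sq_ne_one {a : F} (h1 : a ≠ 1) (hm : a ≠ -1) : a * a ≠ 1 := fun h => by
  rcases mul_eq_zero.mp (show (a - 1) * (a + 1) = 0 by linear_combination h) with h' | h'
  · exact h1 (by linear_combination h')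
  · exact hm (by linear_combination h')

lemma exists_triple [Fintype F] (hq : 4 ≤ Fintype.card F) :
    ∃ a : F, a ≠ 0 ∧ a ≠ 1 ∧ a ≠ -1 := by
  classical
  by_contra h
  push_neg at h
  have hsub : (Finset.univ : Finset F) ⊆ {0, 1, -1} := by
    intro a _
    simp only [Finset.mem_insert, Finset.mem_singleton]
    rcases eq_or_ne a 0 with h0 | h0
    · exact Or.inl h0
    rcases eq_or_ne a 1 with h1 | h1
    · exact Or.inr (Or.inl h1)
    · exact Or.inr (Or.inr (h a h0 h1))
  have hcard := Finset.card_le_card hsub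
  have h3 : ({0, 1, -1} : Finset F).card ≤ 3 :=
    le_trans (Finset.card_insert_le _ _) (by
      exact Nat.succ_le_succ (by simpa using Finset.card_insert_le (1 : F) ({-1} : Finset F)))
  rw [Finset.card_univ] at hcard
  omega

/-- Case B, `M 1 1 ≠ 0`, using `a` with `a² = -1`. -/
lemma caseB (hN : N.Normal) (a : F) (ha2 : a * a = -1) (h2 : (2 : F) ≠ 0)
    (M : Matrix.SpecialLinearGroup (Fin 2) F) (hM : M ∈ N)
    (h00 : M.1 0 0 = 0) (h11 : M.1 1 1 ≠ 0) :
    ∃ t : F, t ≠ 0 ∧ E' t ∈ N := by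
  have ha : a ≠ 0 := by
    intro h; rw [h, mul_zero] at ha2
    exact absurd (show (1:F) = 0 by linear_combination ha2) one_ne_zero
  set b := M.1 1 0 with hb
  set c := M.1 0 1 with hc
  set r := M.1 1 1 with hr
  have hcb : c * b = -1 := by
    have := det_entries M
    rw [h00] at this
    linear_combination -this
  have hbne : b ≠ 0 := by
    intro h; rw [h, mul_zero] at hcb
    exact absurd (show (1:F) = 0 by linear_combination hcb) one_ne_zero
  have hM_eq : M.1 = !![0, c; b, r] := by
    ext i j; fin_cases i <;> fin_cases j <;> simp [h00, hb, hc, hr]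
  have hMinv : (M⁻¹).1 = !![r, -c; -b, 0] := by
    rw [SL2_inv_expl]
    ext i j; fin_cases i <;> fin_cases j <;> simp [h00, hb, hc, hr]
  have hdginv : ((dg a ha)⁻¹).1 = !![a⁻¹, 0; 0, a] := by
    rw [SL2_inv_expl]
    ext i j; fin_cases i <;> fin_cases j <;> simp [dg]
  have hai : a⁻¹ = -a := inv_eq_of_mul_eq_one_right (by linear_combination -ha2)
  set k := M * dg a ha * M⁻¹ * (dg a ha)⁻¹ with hkdef
  have hkN : k ∈ N := by
    have h1 : dg a ha * M⁻¹ * (dg a ha)⁻¹ ∈ N := hN.conj_mem _ (N.inv_mem hM) _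
    have := N.mul_mem hM h1
    rwa [show M * (dg a ha * M⁻¹ * (dg a ha)⁻¹) = k by rw [hkdef]; group] at this
  have hk : (k.1) = !![-1, 0; 2 * (b * r), -1] := by
    rw [hkdef, coe_mul, coe_mul, coe_mul, hM_eq, hMinv, dg_coe, hdginv, hai]
    simp only [Matrix.mul_fin_two]
    ext i j
    fin_cases i <;> fin_cases j
    · simp; linear_combination (b * c) * ha2 - hcb
    · simp
    · simp; linear_combination (-2*(b * r)) * ha2
    · simp; linear_combination (b * c) * ha2 - hcb
  refine ⟨-(4 * (b * r)), ?_, ?_⟩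
  · have h4 : (4 : F) ≠ 0 := by
      intro h; exact h2 (by
        rcases mul_eq_zero.mp (show (2 : F) * 2 = 0 by linear_combination h) with h' | h' <;>
          exact h')
    simpa using fun h => (mul_ne_zero h4 (mul_ne_zero hbne h11)) h
  · have hident : k * k = E' (-(4 * (b * r))) := by
      ext i j
      rw [coe_mul, hk, E'_coe]
      simp only [Matrix.mul_fin_two]
      fin_cases i <;> fin_cases j <;> simp <;> ring
    rw [← hident]
    exact N.mul_mem hkN hkN

/-- main transvection production -/
lemma exists_transvection [Fintype F] (hq : 4 ≤ Fintype.card F) (hN : N.Normal)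
    (g : Matrix.SpecialLinearGroup (Fin 2) F) (hg : g ∈ N)
    (hgc : g ∉ Subgroup.center (Matrix.SpecialLinearGroup (Fin 2) F)) :
    ∃ t : F, t ≠ 0 ∧ E' t ∈ N := by
  obtain ⟨x, hx0, _⟩ := exists_conj00 g hgc
  set M := x * g * x⁻¹ with hMdef
  have hMN : M ∈ N := hN.conj_mem _ hg x
  by_cases hA : ∃ a : F, a ≠ 0 ∧ a * a * a * a ≠ 1
  · obtain ⟨a, ha, ha4⟩ := hA
    exact caseA hN M hMN hx0 a ha ha4
  push_neg at hA
  obtain ⟨a, ha0, ha1, ham1⟩ := exists_triple hq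
  have ha4 := hA a ha0
  have hsq := sq_ne_one ha1 ham1
  have ha2 : a * a = -1 := by
    rcases mul_eq_zero.mp
        (show (a * a - 1) * (a * a + 1) = 0 by linear_combination ha4) with h | h
    · exact absurd (by linear_combination h) hsq
    · linear_combination h
  have h2 : (2 : F) ≠ 0 := by
    intro h
    exact hsq (by linear_combination ha2 - h)
  by_cases hr : M.1 1 1 ≠ 0
  · exact caseB hN a ha2 h2 M hMN hx0 hr
  push_neg at hr
  set b := M.1 1 0 with hb
  set c := M.1 0 1 with hc
  have hcb : c * b = -1 := by
    have := det_entries M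
    rw [hx0] at this
    linear_combination -this
  have hbne : b ≠ 0 := by
    intro h; rw [h, mul_zero] at hcb
    exact absurd (show (1:F) = 0 by linear_combination hcb) one_ne_zero
  have hM_eq : M.1 = !![0, c; b, 0] := by
    ext i j; fin_cases i <;> fin_cases j <;> simp [hx0, hr, hb, hc]
  have hMinv : (M⁻¹).1 = !![0, -c; -b, 0] := by
    rw [SL2_inv_expl]
    ext i j; fin_cases i <;> fin_cases j <;> simp [hx0, hr, hb, hc]
  -- choose s with s ≠ 0 and b²s² + 2 ≠ 0
  obtain ⟨s, hs0, hstr⟩ : ∃ s : F, s ≠ 0 ∧ b * b * (s * s) + 2 ≠ 0 := by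
    by_cases hb2 : b * b + 2 = 0
    · refine ⟨a, ha0, ?_⟩
      intro h
      have h4 : (4 : F) = 0 := by linear_combination h + hb2 - (b * b) * ha2
      exact h2 (by
        rcases mul_eq_zero.mp (show (2 : F) * 2 = 0 by linear_combination h4) with h' | h' <;>
          exact h')
    · exact ⟨1, one_ne_zero, by simpa using hb2⟩
  set m := M * E s * M⁻¹ * (E s)⁻¹ with hmdef
  have hmN : m ∈ N := by
    have h1 : E s * M⁻¹ * (E s)⁻¹ ∈ N := hN.conj_mem _ (N.inv_mem hMN) _
    have := N.mul_mem hMN h1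
    rwa [show M * (E s * M⁻¹ * (E s)⁻¹) = m by rw [hmdef]; group] at this
  have hm_eq : m.1 = !![1, -s; -(b * b * s), b * b * (s * s) + 1] := by
    rw [hmdef, coe_mul, coe_mul, coe_mul, hM_eq, hMinv, E_coe, E_inv, E_coe]
    simp only [Matrix.mul_fin_two]
    ext i j
    fin_cases i <;> fin_cases j
    · simp; linear_combination -hcb
    · simp; linear_combination s * hcb
    · simp; ring
    · simp; linear_combination -hcb
  have hmnc : m ∉ Subgroup.center (Matrix.SpecialLinearGroup (Fin 2) F) := by
    intro hmem
    have := (offdiag_eq_zero_of_central hmem).1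
    rw [hm_eq] at this
    simp at this
    exact hs0 this
  obtain ⟨y, hy0, hy1⟩ := exists_conj00 m hmnc
  have hM'N : y * m * y⁻¹ ∈ N := hN.conj_mem _ hmN y
  refine caseB hN a ha2 h2 _ hM'N hy0 ?_
  rw [hy1, hm_eq]
  show !![1, -s; -(b * b * s), b * b * (s * s) + 1] 0 0
      + !![1, -s; -(b * b * s), b * b * (s * s) + 1] 1 1 ≠ 0
  norm_num
  intro h
  exact hstr (by linear_combination h)

end Transvection

end PSL2Aux

open PSL2Aux in
/-- `PSL₂(F_q) = SL₂(F_q)/center` is a simple group for every prime power `q ≥ 4`. -/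
theorem PSL2_simple_of_card_ge_four
    (F : Type*) [Field F] [Fintype F] (hq : 4 ≤ Fintype.card F) :
    IsSimpleGroup
      (Matrix.SpecialLinearGroup (Fin 2) F ⧸
        Subgroup.center (Matrix.SpecialLinearGroup (Fin 2) F)) := by
  set Z := Subgroup.center (Matrix.SpecialLinearGroup (Fin 2) F) with hZ
  have hnt : Nontrivial (Matrix.SpecialLinearGroup (Fin 2) F ⧸ Z) := by
    refine ⟨⟨QuotientGroup.mk (E (1 : F)), 1, fun h => ?_⟩⟩
    have hmem : E (1 : F) ∈ Z := (QuotientGroup.eq_one_iff _).mp h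
    have := (offdiag_eq_zero_of_central hmem).1
    rw [E_coe] at this
    norm_num at this
  haveI := hnt
  refine ⟨fun H hH => ?_⟩
  set φ := QuotientGroup.mk' Z with hφ
  set N := H.comap φ with hN
  have hNnorm : N.Normal := hH.comap φ
  by_cases hNZ : ∀ g ∈ N, g ∈ Z
  · left
    rw [eq_bot_iff]
    intro x hx
    obtain ⟨g, rfl⟩ := QuotientGroup.mk'_surjective Z x
    have hg : g ∈ N := Subgroup.mem_comap.mpr hx
    rw [Subgroup.mem_bot]
    exact (QuotientGroup.eq_one_iff g).mpr (hNZ g hg)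
  · right
    push_neg at hNZ
    obtain ⟨g, hgN, hgZ⟩ := hNZ
    obtain ⟨t, ht, hEt⟩ := exists_transvection hq hNnorm g hgN hgZ
    have hTop := eq_top hNnorm t ht hEt
    rw [eq_top_iff]
    intro x _
    obtain ⟨g', rfl⟩ := QuotientGroup.mk'_surjective Z x
    have hg' : g' ∈ N := by rw [hTop]; exact Subgroup.mem_top g'
    exact Subgroup.mem_comap.mp hg'
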